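/- Let S ⪰ 0 be p×p, Ψ a positive definite diagonal matrix, and let λ₁ ≥ ⋯ ≥ λ_p be the eigenvalues of M = Ψ^{-1/2} S Ψ^{-1/2}. With B* = Ψ^{1/2} U D^{1/2} as in the optimal FA update (D = Diag(max(λ_i−1,0) for i ≤ r, 0 otherwise)), the resulting covariance Σ* = B*B*ᵀ + Ψ satisfies Ψ^{-1/2} Σ* Ψ^{-1/2} = U Diag(max{λ₁,1},…,max{λ_r,1},1,…,1) Uᵀ, i.e., the optimum 'clips' the top r eigenvalues of M from below at 1 and sets the rest to 1. -/

import Mathlib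

open Matrix Real

/-- eigenvalue clipping at the FA optimum.  With
`M = Ψ^{-1/2} S Ψ^{-1/2} = U (diagonal lam) Uᵀ` (sorted eigenvalues) and
`B* = Ψ^{1/2} U D^{1/2}` the optimal loading update, the resulting
`Σ* = B*B*ᵀ + Ψ` satisfies
`Ψ^{-1/2} Σ* Ψ^{-1/2} = U Diag(max{lam₁,1},…,max{lam_r,1},1,…,1) Uᵀ`. -/
theorem fa_optimum_clips_eigenvalues
    (p r : ℕ) (hr : r ≤ p)
    (ψ : Fin p → ℝ) (hψ : ∀ i, 0 < ψ i)
    (S : Matrix (Fin p) (Fin p) ℝ) (hS : S.PosSemidef)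
    (U : Matrix (Fin p) (Fin p) ℝ) (hU : U * Uᵀ = 1 ∧ Uᵀ * U = 1)
    (lam : Fin p → ℝ) (hsort : ∀ i j : Fin p, i ≤ j → lam j ≤ lam i)
    (hdecomp :
      Matrix.diagonal (fun i => (Real.sqrt (ψ i))⁻¹) * S *
          Matrix.diagonal (fun i => (Real.sqrt (ψ i))⁻¹) =
        U * Matrix.diagonal lam * Uᵀ)
    (Bstar : Matrix (Fin p) (Fin r) ℝ)
    (hBstar : ∀ (i : Fin p) (j : Fin r),
      Bstar i j = (Matrix.diagonal (fun k => Real.sqrt (ψ k)) * U) i (Fin.castLE hr j) *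
        Real.sqrt (max (lam (Fin.castLE hr j) - 1) 0)) :
    Matrix.diagonal (fun i => (Real.sqrt (ψ i))⁻¹) *
        (Bstar * Bstarᵀ + Matrix.diagonal ψ) *
        Matrix.diagonal (fun i => (Real.sqrt (ψ i))⁻¹) =
      U * Matrix.diagonal
          (fun i : Fin p => if (i : ℕ) < r then max (lam i) 1 else 1) * Uᵀ := by
  have hsq : ∀ i, Real.sqrt (ψ i) ≠ 0 := fun i =>
    ne_of_gt (Real.sqrt_pos.2 (hψ i))
  set C : Matrix (Fin p) (Fin r) ℝ := fun i j =>
    if i = Fin.castLE hr j then Real.sqrt (max (lam (Fin.castLE hr j) - 1) 0) else 0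
    with hC
  have hB : Bstar = Matrix.diagonal (fun k => Real.sqrt (ψ k)) * U * C := by
    ext i j
    rw [hBstar i j]
    simp only [Matrix.mul_apply]
    simp [hC, mul_ite, Finset.sum_ite_eq']
  set g : Fin p → ℝ := fun i => if (i : ℕ) < r then max (lam i - 1) 0 else 0 with hg
  have hCCt : C * Cᵀ = Matrix.diagonal g := by
    ext i j
    simp only [Matrix.mul_apply, Matrix.transpose_apply, Matrix.diagonal_apply]
    simp only [hC]
    by_cases hij : i = j
    · subst hij
      simp only [if_pos rfl]
      by_cases hi : (i : ℕ) < r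
      · rw [Finset.sum_eq_single (⟨(i : ℕ), hi⟩ : Fin r)]
        · have : i = Fin.castLE hr ⟨(i : ℕ), hi⟩ := by
            ext; simp
          rw [if_pos this, ← this]
          rw [Real.mul_self_sqrt (le_max_right _ _)]
          simp [hg, hi]
        · intro k _ hk
          rw [if_neg, zero_mul]
          intro h
          apply hk
          ext
          simpa using congrArg (Fin.val) h.symm
        · simp
      · rw [Finset.sum_eq_zero, hg]
        · simp [hi]
        · intro k _
          rw [if_neg, zero_mul]
          intro h
          exact hi (by simpa [h] using k.isLt)
    · rw [if_neg hij, Finset.sum_eq_zero]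
      intro k _
      by_cases h1 : i = Fin.castLE hr k
      · have h2 : ¬ j = Fin.castLE hr k := fun h2 => hij (h1.trans h2.symm)
        simp [h1, h2]
      · simp [h1]
  have hDD : Matrix.diagonal (fun i => (Real.sqrt (ψ i))⁻¹) *
      Matrix.diagonal (fun k => Real.sqrt (ψ k)) = (1 : Matrix (Fin p) (Fin p) ℝ) := by
    rw [Matrix.diagonal_mul_diagonal]
    convert Matrix.diagonal_one
    exact inv_mul_cancel₀ (hsq _)
  have hDD' : Matrix.diagonal (fun k => Real.sqrt (ψ k)) *
      Matrix.diagonal (fun i => (Real.sqrt (ψ i))⁻¹) = (1 : Matrix (Fin p) (Fin p) ℝ) := by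
    rw [Matrix.diagonal_mul_diagonal]
    convert Matrix.diagonal_one
    exact mul_inv_cancel₀ (hsq _)
  have hDpsi : Matrix.diagonal (fun i => (Real.sqrt (ψ i))⁻¹) * Matrix.diagonal ψ *
      Matrix.diagonal (fun i => (Real.sqrt (ψ i))⁻¹) = (1 : Matrix (Fin p) (Fin p) ℝ) := by
    rw [Matrix.diagonal_mul_diagonal, Matrix.diagonal_mul_diagonal]
    convert Matrix.diagonal_one
    rename_i i
    rw [mul_comm, ← mul_assoc, ← mul_inv, Real.mul_self_sqrt (hψ i).le,
      inv_mul_cancel₀ (ne_of_gt (hψ i))]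
  have hBBt : Bstar * Bstarᵀ = Matrix.diagonal (fun k => Real.sqrt (ψ k)) *
      (U * Matrix.diagonal g * Uᵀ) * Matrix.diagonal (fun k => Real.sqrt (ψ k)) := by
    rw [hB]
    simp only [Matrix.transpose_mul, Matrix.diagonal_transpose]
    rw [show Matrix.diagonal (fun k => Real.sqrt (ψ k)) * U * C *
        (Cᵀ * (Uᵀ * Matrix.diagonal (fun k => Real.sqrt (ψ k)))) =
        Matrix.diagonal (fun k => Real.sqrt (ψ k)) * (U * (C * Cᵀ) * Uᵀ) *
        Matrix.diagonal (fun k => Real.sqrt (ψ k)) by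
      simp only [Matrix.mul_assoc], hCCt]
  rw [mul_add, add_mul, hBBt, hDpsi]
  rw [show Matrix.diagonal (fun i => (Real.sqrt (ψ i))⁻¹) *
      (Matrix.diagonal (fun k => Real.sqrt (ψ k)) * (U * Matrix.diagonal g * Uᵀ) *
        Matrix.diagonal (fun k => Real.sqrt (ψ k))) *
      Matrix.diagonal (fun i => (Real.sqrt (ψ i))⁻¹) =
      (Matrix.diagonal (fun i => (Real.sqrt (ψ i))⁻¹) * Matrix.diagonal (fun k => Real.sqrt (ψ k))) *
      (U * Matrix.diagonal g * Uᵀ) *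
      (Matrix.diagonal (fun k => Real.sqrt (ψ k)) * Matrix.diagonal (fun i => (Real.sqrt (ψ i))⁻¹))
      by noncomm_ring]
  rw [hDD, hDD', one_mul, mul_one]
  have key : Matrix.diagonal (fun i : Fin p => if (i : ℕ) < r then max (lam i) 1 else 1) =
      Matrix.diagonal g + 1 := by
    have hfun : (fun i : Fin p => if (i : ℕ) < r then max (lam i) 1 else 1) =
        g + 1 := by
      funext i
      simp only [hg, Pi.add_apply, Pi.one_apply]
      by_cases hi : (i : ℕ) < r
      · simp only [if_pos hi]
        rcases le_or_gt 1 (lam i) with h | h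
        · rw [max_eq_left h, max_eq_left (by linarith : (0:ℝ) ≤ lam i - 1)]; ring
        · rw [max_eq_right h.le, max_eq_right (by linarith : lam i - 1 ≤ 0), zero_add]
      · simp [hi]
    rw [hfun]
    ext i j
    by_cases h : i = j <;>
      simp [Matrix.diagonal_apply, h, Matrix.one_apply]
  rw [key, show U * (Matrix.diagonal g + 1) * Uᵀ =
      U * Matrix.diagonal g * Uᵀ + U * Uᵀ by noncomm_ring, hU.1]
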